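/- (Sign constancy on dual faces.) Let B be a face of H and let f, g ∈ V* lie in the same face of the dual arrangement H∨. Then f(x) ≥ 0 for all x ∈ B if and only if g(x) ≥ 0 for all x ∈ B. Consequently, for each face B of H, the dual cone {f ∈ V* : f(x) ≥ 0 for all x ∈ B} is a union of faces of H∨. -/

import Mathlib

/-! Basic notions for a (central, essential) arrangement of hyperplanes `H`
in a finite-dimensional real vector space, its faces, flats, the dual
arrangement and its faces, and the big/small dual cones. -/

/-- Two points `x`, `y` lie in the same face of the hyperplane arrangement `H`:
for every hyperplane `W ∈ H` and every linear functional `f` with kernel `W`,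
either `f x · f y > 0` or `f x = f y = 0`. -/
def SameFace {V : Type*} [AddCommGroup V] [Module ℝ V]
    (H : Finset (Submodule ℝ V)) (x y : V) : Prop :=
  ∀ W ∈ H, ∀ f : V →ₗ[ℝ] ℝ, LinearMap.ker f = W →
    (0 < f x * f y ∨ (f x = 0 ∧ f y = 0))

/-- A face of the arrangement `H`: an equivalence class of the relation `SameFace`. -/
def IsFace {V : Type*} [AddCommGroup V] [Module ℝ V]
    (H : Finset (Submodule ℝ V)) (A : Set V) : Prop :=
  ∃ x : V, A = {y | SameFace H x y}

/-- A chamber is an open face. -/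
def IsChamber {V : Type*} [AddCommGroup V] [Module ℝ V] [TopologicalSpace V]
    (H : Finset (Submodule ℝ V)) (A : Set V) : Prop :=
  IsFace H A ∧ IsOpen A

/-- A flat of `H`: an intersection of a subfamily of the hyperplanes
(the empty subfamily gives all of `V`). -/
def IsFlat {V : Type*} [AddCommGroup V] [Module ℝ V]
    (H : Finset (Submodule ℝ V)) (L : Submodule ℝ V) : Prop :=
  ∃ J : Finset (Submodule ℝ V), J ⊆ H ∧ L = J.inf id

/-- Two (continuous) linear functionals `f`, `g` lie in the same face of the dual
arrangement `H∨`: for every 1-dimensional flat `l` of `H` and every `x ∈ l`,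
either `f x · g x > 0` or `f x = g x = 0`. -/
def DualSameFace {V : Type*} [NormedAddCommGroup V] [NormedSpace ℝ V]
    (H : Finset (Submodule ℝ V)) (f g : V →L[ℝ] ℝ) : Prop :=
  ∀ l : Submodule ℝ V, IsFlat H l → Module.finrank ℝ l = 1 →
    ∀ x ∈ l, (0 < f x * g x ∨ (f x = 0 ∧ g x = 0))

/-- A face of the dual arrangement `H∨` in the dual space. -/
def IsDualFace {V : Type*} [NormedAddCommGroup V] [NormedSpace ℝ V]
    (H : Finset (Submodule ℝ V)) (A : Set (V →L[ℝ] ℝ)) : Prop :=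
  ∃ f : V →L[ℝ] ℝ, A = {g | DualSameFace H f g}

/-- A chamber of the dual arrangement: an open dual face. -/
def IsDualChamber {V : Type*} [NormedAddCommGroup V] [NormedSpace ℝ V]
    (H : Finset (Submodule ℝ V)) (A : Set (V →L[ℝ] ℝ)) : Prop :=
  IsDualFace H A ∧ IsOpen A

/-- The big dual cone `U(A∨)` of a dual face `A∨`. -/
def bigCone {V : Type*} [NormedAddCommGroup V] [NormedSpace ℝ V]
    (A : Set (V →L[ℝ] ℝ)) : Set V :=
  {x | ∀ f ∈ A, 0 ≤ f x}

/-- The small dual cone `V(A∨)` of a dual face `A∨`: the intersection of the big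
dual cones of all dual chambers `B∨` with `A∨ ≤ B∨`. -/
def smallCone {V : Type*} [NormedAddCommGroup V] [NormedSpace ℝ V]
    (H : Finset (Submodule ℝ V)) (A : Set (V →L[ℝ] ℝ)) : Set V :=
  ⋂ B ∈ {B : Set (V →L[ℝ] ℝ) | IsDualChamber H B ∧ A ⊆ closure B}, bigCone B

open Set

/-- Two nonzero functionals with the same kernel are proportional. -/
lemma ker_eq_prop {V : Type*} [AddCommGroup V] [Module ℝ V]
    {f g : V →ₗ[ℝ] ℝ} (hg : g ≠ 0) (h : LinearMap.ker f = LinearMap.ker g) :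
    ∃ c : ℝ, c ≠ 0 ∧ ∀ v, f v = c * g v := by
  obtain ⟨x, hx⟩ : ∃ x, g x ≠ 0 := by
    by_contra hc; push_neg at hc
    exact hg (LinearMap.ext fun v => hc v)
  set x' := (g x)⁻¹ • x with hx'
  have hgx' : g x' = 1 := by simp [hx', inv_mul_cancel₀ hx]
  have hmain : ∀ v, f v = (g v) * f x' := by
    intro v
    have hker : v - (g v) • x' ∈ LinearMap.ker g := by
      simp [LinearMap.mem_ker, hgx']
    rw [← h] at hker
    have : f (v - (g v) • x') = 0 := hker
    simp only [map_sub, map_smul, smul_eq_mul] at this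
    linarith
  refine ⟨f x', ?_, fun v => by rw [hmain v, mul_comm]⟩
  intro h0
  have hfz : f = 0 := LinearMap.ext fun v => by rw [hmain v, h0, mul_zero]; rfl
  rw [hfz, LinearMap.ker_zero] at h
  exact hx (by rw [← LinearMap.mem_ker, ← h]; trivial)

set_option maxHeartbeats 1000000 in
/-- Key lemma: sign constancy of dual-face mates on a face of `H`. -/
lemma signKey {V : Type*} [NormedAddCommGroup V] [NormedSpace ℝ V]
    [FiniteDimensional ℝ V] (H : Finset (Submodule ℝ V))
    (hHyp : ∀ W ∈ H, ∃ f : V →ₗ[ℝ] ℝ, f ≠ 0 ∧ LinearMap.ker f = W)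
    (hEss : (⋂ W ∈ H, (W : Set V)) = {0})
    (x₀ : V) (f g : V →L[ℝ] ℝ) (hfg : DualSameFace H f g)
    (hf : ∀ x, SameFace H x₀ x → 0 ≤ f x) :
    ∀ x, SameFace H x₀ x → 0 ≤ g x := by
  classical
  -- choose a defining functional for each hyperplane
  set F : Submodule ℝ V → (V →ₗ[ℝ] ℝ) :=
    fun W => if h : W ∈ H then (hHyp W h).choose else 0 with hFdef
  have hF : ∀ W ∈ H, F W ≠ 0 ∧ LinearMap.ker (F W) = W := by
    intro W hW
    simp only [hFdef, dif_pos hW]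
    exact (hHyp W hW).choose_spec
  -- characterization of the face via the chosen functionals
  have memB : ∀ y, SameFace H x₀ y ↔
      ∀ W ∈ H, (0 < F W x₀ * F W y ∨ (F W x₀ = 0 ∧ F W y = 0)) := by
    intro y
    constructor
    · intro h W hW; exact h W hW (F W) (hF W hW).2
    · intro h W hW φ hφ
      obtain ⟨c, hc, hcv⟩ := ker_eq_prop (hF W hW).1 (by rw [hφ, (hF W hW).2])
      rcases h W hW with hp | ⟨h1, h2⟩
      · left
        rw [hcv, hcv]
        have : c * F W x₀ * (c * F W y) = c ^ 2 * (F W x₀ * F W y) := by ring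
        rw [this]
        positivity
      · right
        rw [hcv, hcv, h1, h2]; simp
  -- closed face
  set Bc : Set V := {y | ∀ W ∈ H, 0 ≤ F W x₀ * F W y ∧ (F W x₀ = 0 → F W y = 0)}
    with hBcdef
  have hBsub : ∀ y, SameFace H x₀ y → y ∈ Bc := by
    intro y hy W hW
    rcases (memB y).1 hy W hW with hp | ⟨h1, h2⟩
    · exact ⟨le_of_lt hp, fun h0 => by rw [h0] at hp; simp at hp⟩
    · exact ⟨by rw [h1, h2]; simp, fun _ => h2⟩
  have hx₀B : SameFace H x₀ x₀ := by
    intro W hW φ hφ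
    rcases eq_or_ne (φ x₀) 0 with h0 | h0
    · exact Or.inr ⟨h0, h0⟩
    · exact Or.inl (mul_self_pos.mpr h0)
  have hx₀Bc : x₀ ∈ Bc := hBsub x₀ hx₀B
  -- f is nonnegative on the closed face
  have hfBc : ∀ y ∈ Bc, 0 ≤ f y := by
    intro y hy
    by_contra hneg
    push_neg at hneg
    have hx0f : 0 ≤ f x₀ := hf x₀ hx₀B
    have hd : (0:ℝ) < f x₀ - f y := by linarith
    set t : ℝ := (- f y) / (2 * (f x₀ - f y)) with htdef
    have ht0 : 0 < t := div_pos (by linarith) (by linarith)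
    have ht1 : t ≤ 1 / 2 := by
      rw [htdef, div_le_div_iff₀ (by positivity) (by norm_num)]
      nlinarith
    have hmem : SameFace H x₀ (t • x₀ + (1 - t) • y) := by
      rw [memB]
      intro W hW
      have hval : F W (t • x₀ + (1 - t) • y) = t * F W x₀ + (1 - t) * F W y := by
        simp [smul_eq_mul]
      rcases eq_or_ne (F W x₀) 0 with h0 | h0
      · right
        refine ⟨h0, ?_⟩
        rw [hval, h0, (hy W hW).2 h0]; ring
      · left
        rw [hval]
        have h1 := (hy W hW).1
        have h2 : 0 < F W x₀ * F W x₀ := mul_self_pos.mpr h0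
        nlinarith
    have := hf _ hmem
    have hval : f (t • x₀ + (1 - t) • y) = t * f x₀ + (1 - t) * f y := by
      simp [smul_eq_mul]
    rw [hval] at this
    have ht : t * (f x₀ - f y) = - f y / 2 := by
      rw [htdef]; field_simp
    nlinarith
  -- the positive functional
  set hsum : V →ₗ[ℝ] ℝ := ∑ W ∈ H, (F W x₀) • F W with hsumdef
  have hsumval : ∀ y, hsum y = ∑ W ∈ H, F W x₀ * F W y := by
    intro y
    simp [hsumdef, LinearMap.sum_apply, smul_eq_mul]
  have hsumnn : ∀ y ∈ Bc, 0 ≤ hsum y := by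
    intro y hy
    rw [hsumval]
    exact Finset.sum_nonneg fun W hW => (hy W hW).1
  have hpos : ∀ y ∈ Bc, y ≠ 0 → 0 < hsum y := by
    intro y hy hy0
    rcases (hsumnn y hy).lt_or_eq with h | h
    · exact h
    · exfalso
      rw [hsumval] at h
      have hzero : ∀ W ∈ H, F W x₀ * F W y = 0 :=
        (Finset.sum_eq_zero_iff_of_nonneg fun W hW => (hy W hW).1).mp h.symm
      have hys : ∀ W ∈ H, F W y = 0 := by
        intro W hW
        rcases eq_or_ne (F W x₀) 0 with h0 | h0
        · exact (hy W hW).2 h0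
        · have := hzero W hW
          exact (mul_eq_zero.mp this).resolve_left h0
      have : y ∈ ⋂ W ∈ H, (W : Set V) := by
        refine Set.mem_iInter₂.mpr fun W hW => ?_
        have hk : y ∈ LinearMap.ker (F W) := hys W hW
        rw [(hF W hW).2] at hk
        exact hk
      rw [hEss] at this
      exact hy0 this
  have hcont : Continuous hsum := hsum.continuous_of_finiteDimensional
  -- closedness of Bc
  have hclosed : IsClosed Bc := by
    have hrw : Bc = ⋂ W ∈ H,
        ({y | 0 ≤ F W x₀ * F W y} ∩ {y : V | F W x₀ = 0 → F W y = 0}) := by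
      ext y
      simp only [hBcdef, Set.mem_setOf_eq, Set.mem_iInter, Set.mem_inter_iff]
    rw [hrw]
    refine isClosed_biInter fun W hW => IsClosed.inter ?_ ?_
    · exact isClosed_le continuous_const
        (continuous_const.mul (F W).continuous_of_finiteDimensional)
    · rcases eq_or_ne (F W x₀) 0 with h0 | h0
      · have : {y : V | F W x₀ = 0 → F W y = 0} = {y : V | F W y = 0} := by
          ext y; simp [h0]
        rw [this]
        exact isClosed_eq (F W).continuous_of_finiteDimensional continuous_const
      · have : {y : V | F W x₀ = 0 → F W y = 0} = Set.univ := by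
          ext y; simp [h0]
        rw [this]; exact isClosed_univ
  -- convexity and scaling
  have hconv : Convex ℝ Bc := by
    intro y hy z hz a b ha hb hab
    intro W hW
    have hval : F W (a • y + b • z) = a * F W y + b * F W z := by
      simp [smul_eq_mul]
    constructor
    · rw [hval]
      have h1 := (hy W hW).1
      have h2 := (hz W hW).1
      nlinarith
    · intro h0
      rw [hval, (hy W hW).2 h0, (hz W hW).2 h0]; ring
  have hsmul : ∀ (c : ℝ), 0 ≤ c → ∀ y ∈ Bc, c • y ∈ Bc := by
    intro c hc y hy W hW
    have hval : F W (c • y) = c * F W y := by simp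
    constructor
    · rw [hval]
      have h1 := (hy W hW).1
      nlinarith
    · intro h0
      rw [hval, (hy W hW).2 h0]; ring
  -- the compact slice
  set K : Set V := Bc ∩ {y | hsum y = 1} with hKdef
  have hKne0 : ∀ y ∈ K, y ≠ 0 := by
    rintro y ⟨_, hy1⟩ rfl
    simp at hy1
  have hKclosed : IsClosed K := hclosed.inter (isClosed_eq hcont continuous_const)
  have hKconv : Convex ℝ K := by
    refine hconv.inter ?_
    intro y hy z hz a b ha hb hab
    simp only [Set.mem_setOf_eq] at *
    simp [smul_eq_mul, hy, hz]
    linarith [hab]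
  have hKbdd : Bornology.IsBounded K := by
    set C : Set V := Metric.sphere (0 : V) 1 ∩ Bc with hCdef
    have hmemC : ∀ y ∈ K, (‖y‖⁻¹ • y) ∈ C := by
      intro y hy
      have hy0 := hKne0 y hy
      have hn0 : ‖y‖ ≠ 0 := norm_ne_zero_iff.mpr hy0
      constructor
      · simp [norm_smul, inv_mul_cancel₀ hn0, abs_of_nonneg (norm_nonneg y)]
      · exact hsmul _ (by positivity) y hy.1
    rcases C.eq_empty_or_nonempty with hCe | hCne
    · have : K = ∅ := by
        by_contra h
        obtain ⟨y, hy⟩ := Set.nonempty_iff_ne_empty.mpr h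
        have := hmemC y hy
        rw [hCe] at this
        exact this
      rw [this]
      exact Bornology.isBounded_empty
    · have hCcomp : IsCompact C := (isCompact_sphere 0 1).inter_right hclosed
      obtain ⟨u₀, hu₀C, hmin⟩ := hCcomp.exists_isMinOn hCne hcont.continuousOn
      have hu₀0 : u₀ ≠ 0 := by
        intro h
        have := hu₀C.1
        rw [h] at this
        simp at this
      have hm : 0 < hsum u₀ := hpos u₀ hu₀C.2 hu₀0
      have : K ⊆ Metric.closedBall 0 (hsum u₀)⁻¹ := by
        intro y hy
        have hy0 := hKne0 y hy
        have hn0 : (0:ℝ) < ‖y‖ := norm_pos_iff.mpr hy0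
        have h1 : hsum (‖y‖⁻¹ • y) = ‖y‖⁻¹ := by
          rw [map_smul, smul_eq_mul, hy.2, mul_one]
        have h2 : hsum u₀ ≤ hsum (‖y‖⁻¹ • y) := hmin (hmemC y hy)
        rw [h1] at h2
        rw [Metric.mem_closedBall, dist_zero_right]
        have hiv : ‖y‖⁻¹ * ‖y‖ = 1 := inv_mul_cancel₀ (ne_of_gt hn0)
        have hiv2 : hsum u₀ * (hsum u₀)⁻¹ = 1 := mul_inv_cancel₀ (ne_of_gt hm)
        nlinarith [mul_pos hm hn0, inv_pos.mpr hm]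
      exact (Metric.isBounded_closedBall).subset this
  have hKcomp : IsCompact K := Metric.isCompact_of_isClosed_isBounded hKclosed hKbdd
  -- extreme points lie on 1-dimensional flats, so g is nonnegative there
  have hExt : ∀ e ∈ K.extremePoints ℝ, 0 ≤ g e := by
    intro e he
    obtain ⟨heK, hmax⟩ := he
    have he0 : e ≠ 0 := hKne0 e heK
    set J : Finset (Submodule ℝ V) := H.filter (fun W => F W e = 0) with hJdef
    set L : Submodule ℝ V := J.inf id with hLdef
    have hmemL : ∀ v : V, v ∈ L ↔ ∀ W ∈ J, v ∈ W := by
      intro v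
      rw [hLdef, Submodule.mem_finsetInf]
      rfl
    have heL : e ∈ L := by
      rw [hmemL]
      intro W hW
      obtain ⟨hWH, hWe⟩ := Finset.mem_filter.mp hW
      rw [← (hF W hWH).2]
      exact hWe
    have hLflat : IsFlat H L := ⟨J, Finset.filter_subset _ _, hLdef⟩
    -- pointedness across the slice: L ⊓ ker hsum = ⊥
    have hbot : L ⊓ LinearMap.ker hsum = ⊥ := by
      rw [Submodule.eq_bot_iff]
      rintro v ⟨hvL, hvker⟩
      by_contra hv0
      have hvW : ∀ W ∈ H, F W e = 0 → F W v = 0 := by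
        intro W hW hWe
        have : v ∈ W := (hmemL v).mp hvL W (Finset.mem_filter.mpr ⟨hW, hWe⟩)
        rw [← (hF W hW).2] at this
        exact this
      have hev : ∀ᶠ t : ℝ in nhds 0, (e + t • v) ∈ Bc := by
        have : ∀ᶠ t : ℝ in nhds 0, ∀ W ∈ H,
            0 ≤ F W x₀ * F W (e + t • v) ∧ (F W x₀ = 0 → F W (e + t • v) = 0) := by
          rw [Finset.eventually_all]
          intro W hW
          have hval : ∀ t : ℝ, F W (e + t • v) = F W e + t * F W v := by
            intro t; simp [smul_eq_mul]
          rcases eq_or_ne (F W e) 0 with hWe | hWe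
          · refine Filter.Eventually.of_forall fun t => ?_
            rw [hval, hWe, hvW W hW hWe]
            norm_num
          · have hx00 : F W x₀ ≠ 0 := by
              intro h0
              exact hWe ((heK.1 W hW).2 h0)
            have hp0 : 0 < F W x₀ * F W e :=
              lt_of_le_of_ne (heK.1 W hW).1
                (by simp [mul_eq_zero, hx00, hWe, eq_comm])
            have hc : Continuous fun t : ℝ => F W x₀ * (F W e + t * F W v) := by
              fun_prop
            have hten : Filter.Tendsto (fun t : ℝ => F W x₀ * (F W e + t * F W v))
                (nhds 0) (nhds (F W x₀ * F W e)) := by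
              have := hc.tendsto 0
              simpa using this
            have := hten.eventually (lt_mem_nhds hp0)
            filter_upwards [this] with t ht
            rw [hval]
            exact ⟨le_of_lt ht, fun h0 => absurd h0 hx00⟩
        filter_upwards [this] with t ht
        exact ht
      obtain ⟨ε, hε, hball⟩ := Metric.eventually_nhds_iff.mp hev
      set t : ℝ := ε / 2 with htdef
      have ht0 : 0 < t := by positivity
      have hsumv : hsum v = 0 := hvker
      have hKmem : ∀ s : ℝ, |s| < ε → (e + s • v) ∈ K := by
        intro s hs
        refine ⟨hball (by simpa using hs), ?_⟩
        simp only [Set.mem_setOf_eq, map_add, map_smul, smul_eq_mul, hsumv, mul_zero,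
          add_zero]
        exact heK.2
      have habs : |t| < ε := by
        rw [abs_of_pos ht0]; linarith
      have habs' : |(-t)| < ε := by
        rw [abs_neg, abs_of_pos ht0]; linarith
      have hx₁ : (e + (-t) • v) ∈ K := hKmem _ habs'
      have hx₂ : (e + t • v) ∈ K := hKmem _ habs
      have hseg : e ∈ openSegment ℝ (e + (-t) • v) (e + t • v) := by
        refine ⟨1/2, 1/2, by norm_num, by norm_num, by norm_num, ?_⟩
        module
      have := hmax hx₁ hx₂ hseg
      have hv' : (-t) • v = 0 := by
        have : e + (-t) • v = e := this
        linear_combination (norm := module) this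
      have : v = 0 := by
        have := smul_eq_zero.mp hv'
        rcases this with h | h
        · exact absurd h (by simp; linarith)
        · exact h
      exact hv0 this
    -- finrank L = 1
    have hLinj : Function.Injective (hsum.domRestrict L) := by
      rw [← LinearMap.ker_eq_bot, Submodule.eq_bot_iff]
      rintro ⟨v, hvL⟩ hv
      have hvk : v ∈ LinearMap.ker hsum := by
        simpa [LinearMap.domRestrict] using hv
      have : v ∈ L ⊓ LinearMap.ker hsum := ⟨hvL, hvk⟩
      rw [hbot] at this
      simpa using this
    have hle : Module.finrank ℝ L ≤ 1 := by
      have := LinearMap.finrank_le_finrank_of_injective hLinj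
      simpa using this
    have hne : Module.finrank ℝ L ≠ 0 := by
      intro h
      rw [Submodule.finrank_eq_zero] at h
      rw [h] at heL
      simp at heL
      exact he0 heL
    have h1 : Module.finrank ℝ L = 1 := by omega
    rcases hfg L hLflat h1 e heL with hprod | ⟨_, hg0⟩
    · by_contra hgneg
      push_neg at hgneg
      have hfe : 0 ≤ f e := hfBc e heK.1
      nlinarith
    · rw [hg0]
  -- g ≥ 0 on K by Krein–Milman
  have hKg : ∀ y ∈ K, 0 ≤ g y := by
    have hKM : closure (convexHull ℝ (K.extremePoints ℝ)) = K :=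
      closure_convexHull_extremePoints hKcomp hKconv
    intro y hy
    rw [← hKM] at hy
    have hconvg : Convex ℝ {y : V | 0 ≤ g y} := by
      intro a ha b hb s t hs ht hst
      simp only [Set.mem_setOf_eq, map_add, map_smul, smul_eq_mul] at *
      nlinarith
    have hsub : convexHull ℝ (K.extremePoints ℝ) ⊆ {y : V | 0 ≤ g y} :=
      convexHull_min hExt hconvg
    have hcl : IsClosed {y : V | 0 ≤ g y} := isClosed_le continuous_const g.continuous
    exact closure_minimal hsub hcl hy
  -- conclude on all of Bc
  have hgBc : ∀ y ∈ Bc, 0 ≤ g y := by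
    intro y hy
    rcases eq_or_ne y 0 with rfl | hy0
    · simp
    · have hp := hpos y hy hy0
      have hK : ((hsum y)⁻¹ • y) ∈ K := by
        refine ⟨hsmul _ (by positivity) y hy, ?_⟩
        simp [Set.mem_setOf_eq, smul_eq_mul, inv_mul_cancel₀ (ne_of_gt hp)]
      have := hKg _ hK
      rw [map_smul, smul_eq_mul] at this
      have hip : 0 < (hsum y)⁻¹ := inv_pos.mpr hp
      nlinarith
  intro x hx
  exact hgBc x (hBsub x hx)

/-- sign constancy on dual faces: if `f`, `g` lie in the same face
of the dual arrangement and `B` is a face of `H`, then `f ≥ 0` on `B` iff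
`g ≥ 0` on `B`; consequently the dual cone of `B` is a union of dual faces. -/
theorem statement10 {V : Type*} [NormedAddCommGroup V] [NormedSpace ℝ V]
    [FiniteDimensional ℝ V] (H : Finset (Submodule ℝ V))
    (hHyp : ∀ W ∈ H, ∃ f : V →ₗ[ℝ] ℝ, f ≠ 0 ∧ LinearMap.ker f = W)
    (hEss : (⋂ W ∈ H, (W : Set V)) = {0})
    (B : Set V) (hB : IsFace H B)
    (f g : V →L[ℝ] ℝ) (hfg : DualSameFace H f g) :
    ((∀ x ∈ B, 0 ≤ f x) ↔ (∀ x ∈ B, 0 ≤ g x)) ∧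
    {φ : V →L[ℝ] ℝ | ∀ x ∈ B, 0 ≤ φ x} =
      ⋃₀ {A : Set (V →L[ℝ] ℝ) |
        IsDualFace H A ∧ A ⊆ {φ : V →L[ℝ] ℝ | ∀ x ∈ B, 0 ≤ φ x}} := by
  obtain ⟨x₀, rfl⟩ := hB
  have hsymm : ∀ f g : V →L[ℝ] ℝ, DualSameFace H f g → DualSameFace H g f := by
    intro f g h l hl h1 x hx
    rcases h l hl h1 x hx with hp | ⟨h1', h2'⟩
    · exact Or.inl (by rwa [mul_comm])
    · exact Or.inr ⟨h2', h1'⟩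
  constructor
  · constructor
    · intro hfpos x hx
      exact signKey H hHyp hEss x₀ f g hfg (fun y hy => hfpos y hy) x hx
    · intro hgpos x hx
      exact signKey H hHyp hEss x₀ g f (hsymm f g hfg) (fun y hy => hgpos y hy) x hx
  · ext φ
    constructor
    · intro hφ
      refine Set.mem_sUnion.mpr ⟨{ψ | DualSameFace H φ ψ}, ⟨⟨φ, rfl⟩, ?_⟩, ?_⟩
      · intro ψ hψ x hx
        exact signKey H hHyp hEss x₀ φ ψ hψ (fun y hy => hφ y hy) x hx
      · intro l hl h1 x hx
        rcases eq_or_ne (φ x) 0 with h0 | h0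
        · exact Or.inr ⟨h0, h0⟩
        · exact Or.inl (mul_self_pos.mpr h0)
    · rintro ⟨A, ⟨hA1, hA2⟩, hφA⟩
      exact hA2 hφA
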